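/- arXiv:1106.2331 — 2 statements merged into one kernel-verified Lean document; each statement's English description precedes it below -/
import Mathlib

section
/- Let Γ be a finite simple graph, G = G(Γ), and let H = G(Y₁) and K = G(Y₂) be canonical parabolic subgroups of G. Let θ be an automorphism of G such that θ(H) = H^f and θ(K) = K^g for some f, g ∈ G. Then there exists h ∈ G such that θ(H ∩ K) = (H ∩ K)^h. -/
namespace PCG

variable {X : Type*}

/-- The orthogonal complement of a set of vertices: all vertices at distance at
most one from every element of `Y`. -/
def perp (Γ : SimpleGraph X) (Y : Set X) : Set X :=
  {u | ∀ y ∈ Y, u = y ∨ Γ.Adj u y}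

/-- The closure operator `cl(Y) = Y^⊥⊥`. -/
def cl (Γ : SimpleGraph X) (Y : Set X) : Set X :=
  perp Γ (perp Γ Y)

/-- The admissible-set operator `𝔞(Y) = ⋂_{y ∈ Y} (y^⊥ \ {y})^⊥` (with `𝔞(∅) = X`). -/
def aSet (Γ : SimpleGraph X) (Y : Set X) : Set X :=
  ⋂ y ∈ Y, perp Γ (perp Γ {y} \ {y})

/-- A set is admissible if it is `𝔞(Y)` for some `Y`. -/
def IsAdmissible (Γ : SimpleGraph X) (A : Set X) : Prop :=
  ∃ Y : Set X, A = aSet Γ Y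

/-- A set is closed if it equals its closure. -/
def IsClosedSet (Γ : SimpleGraph X) (Y : Set X) : Prop :=
  Y = cl Γ Y

/-- `x` dominates `y` if `x^⊥ ∩ y^⊥ = y^⊥ \ {y}`. -/
def Dominates (Γ : SimpleGraph X) (x y : X) : Prop :=
  perp Γ {x} ∩ perp Γ {y} = perp Γ {y} \ {y}

/-- The set of dominated vertices. -/
def Dom (Γ : SimpleGraph X) : Set X :=
  {y | ∃ x, Dominates Γ x y}

/-- The `∼⊥`-equivalence class of `x`: vertices with the same star as `x`. -/
def perpClass (Γ : SimpleGraph X) (x : X) : Set X :=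
  {y | perp Γ {y} = perp Γ {x}}

/-- The `∼◇`-equivalence class of `x`: vertices with the same link as `x`. -/
def diaClass (Γ : SimpleGraph X) (x : X) : Set X :=
  {y | perp Γ {y} \ {y} = perp Γ {x} \ {x}}

/-- The `∼`-equivalence class `[x]`. -/
def simClass (Γ : SimpleGraph X) (x : X) : Set X :=
  perpClass Γ x ∪ diaClass Γ x

/-- The outer admissible set of `y`. -/
def out (Γ : SimpleGraph X) (y : X) : Set X :=
  {x | Dominates Γ x y ∧ simClass Γ x ≠ simClass Γ y}

/-- `C` is the vertex set of a connected component of the full subgraph of `Γ` on `S`. -/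
def IsCompOf (Γ : SimpleGraph X) (S : Set X) (C : Set X) : Prop :=
  ∃ K : (Γ.induce S).ConnectedComponent, C = Subtype.val '' K.supp

/-- Balanced graphs. -/
def Balanced (Γ : SimpleGraph X) : Prop :=
  ∀ v ∈ Dom Γ, out Γ v = ∅ ∨ ∃ C : Set X, IsCompOf Γ ((perp Γ {v})ᶜ) C ∧ out Γ v ⊆ C

/-- Relators of the partially commutative group: commutators of adjacent vertices. -/
def raagRels (Γ : SimpleGraph X) : Set (FreeGroup X) :=
  {w | ∃ x y : X, Γ.Adj x y ∧
    w = FreeGroup.of x * FreeGroup.of y * (FreeGroup.of x)⁻¹ * (FreeGroup.of y)⁻¹}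

/-- The partially commutative group (right-angled Artin group) of `Γ`. -/
abbrev RAAG (Γ : SimpleGraph X) : Type _ := PresentedGroup (raagRels Γ)

/-- The generator of `RAAG Γ` corresponding to a vertex. -/
def gen (Γ : SimpleGraph X) (x : X) : RAAG Γ := PresentedGroup.of x

/-- The canonical parabolic subgroup generated by a set of vertices. -/
def parab (Γ : SimpleGraph X) (Y : Set X) : Subgroup (RAAG Γ) :=
  Subgroup.closure (gen Γ '' Y)

/-- Conjugate of a subgroup: `H^f = f⁻¹ H f`. -/
def conjBy {G : Type*} [Group G] (H : Subgroup G) (f : G) : Subgroup G :=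
  Subgroup.map (MulAut.conj f⁻¹).toMonoidHom H

/-- Inversions. -/
def InvSet (Γ : SimpleGraph X) : Set (MulAut (RAAG Γ)) :=
  {φ | ∃ x : X, φ (gen Γ x) = (gen Γ x)⁻¹ ∧ ∀ y : X, y ≠ x → φ (gen Γ y) = gen Γ y}

/-- Transvections. -/
def TrSet (Γ : SimpleGraph X) : Set (MulAut (RAAG Γ)) :=
  {φ | ∃ x y : X, y ≠ x ∧
    (φ (gen Γ x) = gen Γ x * gen Γ y ∨ φ (gen Γ x) = (gen Γ y)⁻¹ * gen Γ x) ∧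
    ∀ z : X, z ≠ x → φ (gen Γ z) = gen Γ z}

/-- Elementary conjugating automorphisms. -/
def LInnSet (Γ : SimpleGraph X) : Set (MulAut (RAAG Γ)) :=
  {φ | ∃ (x : X) (C : Set X) (ε : ℤ), (ε = 1 ∨ ε = -1) ∧
    IsCompOf Γ ((perp Γ {x})ᶜ) C ∧
    (∀ u ∈ C, φ (gen Γ u) = (gen Γ x ^ ε)⁻¹ * gen Γ u * gen Γ x ^ ε) ∧
    (∀ u : X, u ∉ C → φ (gen Γ u) = gen Γ u)}

/-- The subgroup `Aut*(G)` generated by inversions, transvections and elementary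
conjugating automorphisms. -/
def AutStar (Γ : SimpleGraph X) : Subgroup (MulAut (RAAG Γ)) :=
  Subgroup.closure (InvSet Γ ∪ TrSet Γ ∪ LInnSet Γ)

/-- Basis-conjugating automorphisms. -/
def IsBasisConj (Γ : SimpleGraph X) (φ : MulAut (RAAG Γ)) : Prop :=
  ∀ x : X, ∃ g : RAAG Γ, φ (gen Γ x) = g⁻¹ * gen Γ x * g

/-- Normal conjugating automorphisms. -/
def IsConjN (Γ : SimpleGraph X) (φ : MulAut (RAAG Γ)) : Prop :=
  IsBasisConj Γ φ ∧
    ∀ x : X, ∃ f : RAAG Γ, ∀ z ∈ aSet Γ {x}, φ (gen Γ z) = f⁻¹ * gen Γ z * f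

/-- Vertex conjugating automorphisms. -/
def IsConjV (Γ : SimpleGraph X) (φ : MulAut (RAAG Γ)) : Prop :=
  IsBasisConj Γ φ ∧
    ∀ x : X, ∃ f : RAAG Γ, ∀ y ∈ simClass Γ x, φ (gen Γ y) = f⁻¹ * gen Γ y * f

/-- Membership in `St(K)`. -/
def IsStK (Γ : SimpleGraph X) (φ : MulAut (RAAG Γ)) : Prop :=
  ∀ A : Set X, IsAdmissible Γ A →
    Subgroup.map φ.toMonoidHom (parab Γ A) = parab Γ A

/-- Membership in `St(L)`. -/
def IsStL (Γ : SimpleGraph X) (φ : MulAut (RAAG Γ)) : Prop :=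
  ∀ A : Set X, IsClosedSet Γ A →
    Subgroup.map φ.toMonoidHom (parab Γ A) = parab Γ A

/-- Membership in `St^conj(K)`. -/
def IsStConjK (Γ : SimpleGraph X) (φ : MulAut (RAAG Γ)) : Prop :=
  ∀ A : Set X, IsAdmissible Γ A →
    ∃ f : RAAG Γ, Subgroup.map φ.toMonoidHom (parab Γ A) = conjBy (parab Γ A) f

/-- Aggregate conjugating automorphisms. -/
def AggrSet (Γ : SimpleGraph X) : Set (MulAut (RAAG Γ)) :=
  {φ | ∃ (x : X) (C : Set X), IsCompOf Γ ({x}ᶜ) C ∧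
    (∀ y ∈ C, φ (gen Γ y) = (gen Γ x)⁻¹ * gen Γ y * gen Γ x) ∧
    (∀ y : X, y ∉ C → φ (gen Γ y) = gen Γ y)}

/-- Elementary singular conjugating automorphisms: those `α_{C,x^ε}` with `C` a singleton. -/
def LInnSSet (Γ : SimpleGraph X) : Set (MulAut (RAAG Γ)) :=
  {φ | ∃ (x y : X) (ε : ℤ), (ε = 1 ∨ ε = -1) ∧
    IsCompOf Γ ((perp Γ {x})ᶜ) {y} ∧
    φ (gen Γ y) = (gen Γ x ^ ε)⁻¹ * gen Γ y * gen Γ x ^ ε ∧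
    ∀ u : X, u ≠ y → φ (gen Γ u) = gen Γ u}

/-- Basic collected conjugating automorphisms. -/
def LInnCSet (Γ : SimpleGraph X) : Set (MulAut (RAAG Γ)) :=
  {φ | ∃ x u : X, Dominates Γ x u ∧
    (∀ v ∈ simClass Γ u \ {x}, φ (gen Γ v) = (gen Γ x)⁻¹ * gen Γ v * gen Γ x) ∧
    (∀ v : X, v ∉ simClass Γ u \ {x} → φ (gen Γ v) = gen Γ v)}

/-- Regular elementary conjugating automorphisms. -/
def LInnRSet (Γ : SimpleGraph X) : Set (MulAut (RAAG Γ)) :=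
  (LInnSet Γ ∩ {φ | IsConjV Γ φ}) \ LInnSSet Γ

/-- Basic vertex conjugating automorphisms. -/
def LInnVSet (Γ : SimpleGraph X) : Set (MulAut (RAAG Γ)) :=
  LInnRSet Γ ∪ LInnCSet Γ

/-- Tame extended elementary conjugating automorphisms. -/
def LInnTSet (Γ : SimpleGraph X) : Set (MulAut (RAAG Γ)) :=
  {φ | ∃ (y : X) (L : Set X) (ε : ℤ), (ε = 1 ∨ ε = -1) ∧
    (∀ v ∈ L, ∃ C : Set X, IsCompOf Γ ((perp Γ {y})ᶜ) C ∧ v ∈ C ∧ C ⊆ L) ∧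
    aSet Γ {y} ∩ L = ∅ ∧
    (∀ u ∈ L, φ (gen Γ u) = (gen Γ y ^ ε)⁻¹ * gen Γ u * gen Γ y ^ ε) ∧
    (∀ u : X, u ∉ L → φ (gen Γ u) = gen Γ u)}

/-- `K`-minimal vertices. -/
def KMin (Γ : SimpleGraph X) (x : X) : Prop :=
  ∀ y : X, aSet Γ {y} ⊆ aSet Γ {x} → aSet Γ {y} = aSet Γ {x}

/-- `L`-minimal vertices. -/
def LMin (Γ : SimpleGraph X) (x : X) : Prop :=
  ∀ y : X, cl Γ {y} ⊆ cl Γ {x} → cl Γ {y} = cl Γ {x}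

end PCG

namespace PCG

section Aux

open Subgroup

variable {X : Type*} {Γ : SimpleGraph X}

/-! ### Generalities about `conjBy` -/

theorem mem_conjBy {G : Type*} [Group G] {H : Subgroup G} {a u : G} :
    u ∈ conjBy H a ↔ ∃ x ∈ H, u = a⁻¹ * x * a := by
  simp only [conjBy, Subgroup.mem_map, MulEquiv.coe_toMonoidHom, MulAut.conj_apply, inv_inv]
  constructor
  · rintro ⟨x, hx, rfl⟩; exact ⟨x, hx, rfl⟩
  · rintro ⟨x, hx, rfl⟩; exact ⟨x, hx, rfl⟩

theorem conjBy_one {G : Type*} [Group G] (H : Subgroup G) : conjBy H 1 = H := by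
  ext u; simp [mem_conjBy]

theorem conjBy_conjBy {G : Type*} [Group G] (H : Subgroup G) (a c : G) :
    conjBy (conjBy H a) c = conjBy H (a * c) := by
  ext u
  simp only [mem_conjBy]
  constructor
  · rintro ⟨x, ⟨y, hy, rfl⟩, rfl⟩
    exact ⟨y, hy, by group⟩
  · rintro ⟨y, hy, rfl⟩
    exact ⟨a⁻¹ * y * a, ⟨y, hy, rfl⟩, by group⟩

theorem conjBy_mono {G : Type*} [Group G] {H K : Subgroup G} (h : H ≤ K) (a : G) :
    conjBy H a ≤ conjBy K a :=
  Subgroup.map_mono h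

theorem conjBy_self_mem {G : Type*} [Group G] {H : Subgroup G} {d : G} (hd : d ∈ H) :
    conjBy H d = H := by
  ext u
  simp only [mem_conjBy]
  constructor
  · rintro ⟨x, hx, rfl⟩
    exact mul_mem (mul_mem (inv_mem hd) hx) hd
  · intro hu
    exact ⟨d * u * d⁻¹, mul_mem (mul_mem hd hu) (inv_mem hd), by group⟩

theorem map_conjBy {G : Type*} [Group G] (ψ : MulAut G) (H : Subgroup G) (a : G) :
    Subgroup.map ψ.toMonoidHom (conjBy H a) = conjBy (Subgroup.map ψ.toMonoidHom H) (ψ a) := by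
  ext u
  simp only [mem_conjBy, Subgroup.mem_map, MulEquiv.coe_toMonoidHom]
  constructor
  · rintro ⟨x, ⟨y, hy, rfl⟩, rfl⟩
    exact ⟨ψ y, ⟨y, hy, rfl⟩, by simp [map_mul]⟩
  · rintro ⟨x, ⟨y, hy, rfl⟩, rfl⟩
    exact ⟨a⁻¹ * y * a, ⟨y, hy, rfl⟩, by simp [map_mul]⟩

theorem map_symm_map {G : Type*} [Group G] (θ : MulAut G) (H : Subgroup G) :
    Subgroup.map θ.toMonoidHom (Subgroup.map θ⁻¹.toMonoidHom H) = H := by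
  rw [Subgroup.map_map]
  have : (θ.toMonoidHom.comp θ⁻¹.toMonoidHom) = MonoidHom.id G := by
    ext x; simp
  rw [this, Subgroup.map_id]

theorem map_symm_map' {G : Type*} [Group G] (θ : MulAut G) (H : Subgroup G) :
    Subgroup.map θ⁻¹.toMonoidHom (Subgroup.map θ.toMonoidHom H) = H := by
  simpa using map_symm_map θ⁻¹ H

/-! ### RAAG basics -/

theorem gen_comm {x y : X} (h : Γ.Adj x y) :
    gen Γ x * gen Γ y = gen Γ y * gen Γ x := by
  have hmem : FreeGroup.of x * FreeGroup.of y * (FreeGroup.of x)⁻¹ * (FreeGroup.of y)⁻¹ ∈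
      raagRels Γ := ⟨x, y, h, rfl⟩
  have h1 : PresentedGroup.mk (raagRels Γ)
      (FreeGroup.of x * FreeGroup.of y * (FreeGroup.of x)⁻¹ * (FreeGroup.of y)⁻¹) = 1 := by
    apply (QuotientGroup.eq_one_iff _).2
    exact Subgroup.subset_normalClosure hmem
  have h2 : gen Γ x * gen Γ y * (gen Γ x)⁻¹ * (gen Γ y)⁻¹ = 1 := by
    simp only [map_mul, map_inv] at h1
    exact h1
  have := mul_eq_one_iff_eq_inv.mp h2
  calc gen Γ x * gen Γ y = (gen Γ x * gen Γ y * (gen Γ x)⁻¹ * (gen Γ y)⁻¹) *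
        (gen Γ y * gen Γ x) := by group
    _ = gen Γ y * gen Γ x := by rw [h2]; group

open scoped Classical in
/-- The canonical retraction of the RAAG onto the parabolic subgroup `parab Γ Z`,
killing all generators outside `Z`. -/
noncomputable def ret (Γ : SimpleGraph X) (Z : Set X) : RAAG Γ →* RAAG Γ :=
  PresentedGroup.toGroup (f := fun x => if x ∈ Z then gen Γ x else 1) (by
    rintro r ⟨x, y, hadj, rfl⟩
    simp only [map_mul, map_inv, FreeGroup.lift_apply_of]
    by_cases hx : x ∈ Z <;> by_cases hy : y ∈ Z <;>
      simp only [hx, hy, if_true, if_false, one_mul, mul_one, inv_one]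
    · rw [gen_comm hadj]; group
    all_goals group)

open scoped Classical in
theorem ret_gen (Z : Set X) (x : X) :
    ret Γ Z (gen Γ x) = if x ∈ Z then gen Γ x else 1 :=
  PresentedGroup.toGroup.of _

theorem ret_mem_parab (Z : Set X) (u : RAAG Γ) : ret Γ Z u ∈ parab Γ Z := by
  classical
  refine PresentedGroup.generated_by (raagRels Γ) ((parab Γ Z).comap (ret Γ Z)) ?_ u
  intro j
  have : ret Γ Z (gen Γ j) = if j ∈ Z then gen Γ j else 1 := ret_gen Z j
  simp only [Subgroup.mem_comap]
  show ret Γ Z (PresentedGroup.of j) ∈ parab Γ Z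
  rw [show (PresentedGroup.of j : RAAG Γ) = gen Γ j from rfl, this]
  split_ifs with hj
  · exact Subgroup.subset_closure ⟨j, hj, rfl⟩
  · exact one_mem _

theorem ret_fix {Z : Set X} {u : RAAG Γ} (hu : u ∈ parab Γ Z) : ret Γ Z u = u := by
  classical
  refine Subgroup.closure_induction (k := gen Γ '' Z)
    (p := fun v _ => ret Γ Z v = v) ?_ ?_ ?_ ?_ hu
  · rintro v ⟨z, hz, rfl⟩
    rw [ret_gen, if_pos hz]
  · exact map_one _
  · intro a b _ _ ha hb; rw [map_mul, ha, hb]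
  · intro a _ ha; rw [map_inv, ha]

theorem ret_parab_le {Z Y : Set X} {u : RAAG Γ} (hu : u ∈ parab Γ Y) :
    ret Γ Z u ∈ parab Γ (Z ∩ Y) := by
  classical
  refine Subgroup.closure_induction (k := gen Γ '' Y)
    (p := fun v _ => ret Γ Z v ∈ parab Γ (Z ∩ Y)) ?_ ?_ ?_ ?_ hu
  · rintro v ⟨z, hz, rfl⟩
    rw [ret_gen]
    split_ifs with hzZ
    · exact Subgroup.subset_closure ⟨z, ⟨hzZ, hz⟩, rfl⟩
    · exact one_mem _
  · show ret Γ Z 1 ∈ parab Γ (Z ∩ Y); rw [map_one]; exact one_mem _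
  · intro a b _ _ ha hb
    show ret Γ Z (a * b) ∈ parab Γ (Z ∩ Y)
    rw [map_mul]; exact mul_mem ha hb
  · intro a _ ha
    show ret Γ Z a⁻¹ ∈ parab Γ (Z ∩ Y)
    rw [map_inv]; exact inv_mem ha

theorem parab_mono {Y Z : Set X} (h : Y ⊆ Z) : parab Γ Y ≤ parab Γ Z :=
  Subgroup.closure_mono (Set.image_mono h)

/-- The key intersection bound, obtained by retracting onto `Y₁`. -/
theorem inter_conj_le (Y₁ Y₂ : Set X) (t₁ t₂ : RAAG Γ) :
    conjBy (parab Γ Y₁) t₁ ⊓ conjBy (parab Γ Y₂) t₂ ≤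
      conjBy (parab Γ (Y₁ ∩ Y₂)) (ret Γ Y₁ (t₂ * t₁⁻¹) * t₁) := by
  intro u hu
  obtain ⟨hu1, hu2⟩ := hu
  obtain ⟨α, hα, hαe⟩ := mem_conjBy.1 hu1
  obtain ⟨β, hβ, hβe⟩ := mem_conjBy.1 hu2
  set s : RAAG Γ := t₂ * t₁⁻¹ with hs
  have hv : t₁ * u * t₁⁻¹ = α := by rw [hαe]; group
  have hv2 : t₁ * u * t₁⁻¹ = s⁻¹ * β * s := by rw [hβe, hs]; group
  have hvP : t₁ * u * t₁⁻¹ ∈ parab Γ Y₁ := hv ▸ hα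
  have hret : ret Γ Y₁ (t₁ * u * t₁⁻¹) = t₁ * u * t₁⁻¹ := ret_fix hvP
  have hcalc : t₁ * u * t₁⁻¹ = (ret Γ Y₁ s)⁻¹ * ret Γ Y₁ β * ret Γ Y₁ s := by
    conv_lhs => rw [← hret, hv2]
    rw [map_mul, map_mul, map_inv]
  have hβ' : ret Γ Y₁ β ∈ parab Γ (Y₁ ∩ Y₂) := ret_parab_le hβ
  have : t₁ * u * t₁⁻¹ ∈ conjBy (parab Γ (Y₁ ∩ Y₂)) (ret Γ Y₁ s) :=
    mem_conjBy.2 ⟨ret Γ Y₁ β, hβ', hcalc⟩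
  have : u ∈ conjBy (conjBy (parab Γ (Y₁ ∩ Y₂)) (ret Γ Y₁ s)) t₁ :=
    mem_conjBy.2 ⟨t₁ * u * t₁⁻¹, this, by group⟩
  rwa [conjBy_conjBy] at this

/-- Rigidity: if conjugation by `c` maps `parab Γ Z` into itself, then it maps
it onto itself. -/
theorem conjBy_eq_of_le (Z : Set X) (c : RAAG Γ)
    (hc : ∀ x ∈ parab Γ Z, c⁻¹ * x * c ∈ parab Γ Z) :
    conjBy (parab Γ Z) c = parab Γ Z := by
  set d : RAAG Γ := ret Γ Z c with hd
  have hdP : d ∈ parab Γ Z := ret_mem_parab Z c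
  have key : ∀ x ∈ parab Γ Z, c⁻¹ * x * c = d⁻¹ * x * d := by
    intro x hx
    have h1 : ret Γ Z (c⁻¹ * x * c) = c⁻¹ * x * c := ret_fix (hc x hx)
    have h2 : ret Γ Z (c⁻¹ * x * c) = d⁻¹ * x * d := by
      rw [map_mul, map_mul, map_inv, ret_fix hx, hd]
    rw [← h1, h2]
  have : conjBy (parab Γ Z) c = conjBy (parab Γ Z) d := by
    ext u
    simp only [mem_conjBy]
    constructor
    · rintro ⟨x, hx, rfl⟩; exact ⟨x, hx, (key x hx)⟩
    · rintro ⟨x, hx, rfl⟩; exact ⟨x, hx, (key x hx).symm⟩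
  rw [this, conjBy_self_mem hdP]

end Aux

/-- If an automorphism carries two parabolic subgroups to
conjugates of themselves, then it carries their intersection to a conjugate
of the intersection. -/
theorem parab_inter_conj {X : Type*} [Fintype X] (Γ : SimpleGraph X)
    (Y₁ Y₂ : Set X) (θ : MulAut (RAAG Γ)) (f g : RAAG Γ)
    (h1 : Subgroup.map θ.toMonoidHom (parab Γ Y₁) = conjBy (parab Γ Y₁) f)
    (h2 : Subgroup.map θ.toMonoidHom (parab Γ Y₂) = conjBy (parab Γ Y₂) g) :
    ∃ h : RAAG Γ,
      Subgroup.map θ.toMonoidHom (parab Γ Y₁ ⊓ parab Γ Y₂) =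
        conjBy (parab Γ Y₁ ⊓ parab Γ Y₂) h := by
  classical
  set H := parab Γ Y₁ with hHdef
  set K := parab Γ Y₂ with hKdef
  set P := parab Γ (Y₁ ∩ Y₂) with hPdef
  -- `H ⊓ K = P`
  have hPH : P ≤ H := parab_mono Set.inter_subset_left
  have hPK : P ≤ K := parab_mono Set.inter_subset_right
  have hHK : H ⊓ K = P := by
    refine le_antisymm ?_ (le_inf hPH hPK)
    intro u hu
    have h1 : ret Γ Y₁ u = u := ret_fix hu.1
    have h2 : ret Γ Y₁ u ∈ parab Γ (Y₁ ∩ Y₂) := ret_parab_le hu.2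
    rwa [h1] at h2
  -- the generic one-sided bound
  have step : ∀ (ψ : MulAut (RAAG Γ)) (f' g' : RAAG Γ),
      Subgroup.map ψ.toMonoidHom H = conjBy H f' →
      Subgroup.map ψ.toMonoidHom K = conjBy K g' →
      Subgroup.map ψ.toMonoidHom P ≤ conjBy P (ret Γ Y₁ (g' * f'⁻¹) * f') := by
    intro ψ f' g' e1 e2
    have hle : Subgroup.map ψ.toMonoidHom P ≤ conjBy H f' ⊓ conjBy K g' := by
      refine le_inf ?_ ?_
      · calc Subgroup.map ψ.toMonoidHom P ≤ Subgroup.map ψ.toMonoidHom H :=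
              Subgroup.map_mono hPH
          _ = conjBy H f' := e1
      · calc Subgroup.map ψ.toMonoidHom P ≤ Subgroup.map ψ.toMonoidHom K :=
              Subgroup.map_mono hPK
          _ = conjBy K g' := e2
    exact hle.trans (inter_conj_le Y₁ Y₂ f' g')
  -- hypotheses for `θ⁻¹`
  have h1' : Subgroup.map θ⁻¹.toMonoidHom H = conjBy H (θ⁻¹ f)⁻¹ := by
    have e : H = conjBy (Subgroup.map θ⁻¹.toMonoidHom H) (θ⁻¹ f) := by
      conv_lhs => rw [← map_symm_map' θ H, h1, map_conjBy]
    calc Subgroup.map θ⁻¹.toMonoidHom H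
        = conjBy (conjBy (Subgroup.map θ⁻¹.toMonoidHom H) (θ⁻¹ f)) (θ⁻¹ f)⁻¹ := by
          rw [conjBy_conjBy, mul_inv_cancel, conjBy_one]
      _ = conjBy H (θ⁻¹ f)⁻¹ := by rw [← e]
  have h2' : Subgroup.map θ⁻¹.toMonoidHom K = conjBy K (θ⁻¹ g)⁻¹ := by
    have e : K = conjBy (Subgroup.map θ⁻¹.toMonoidHom K) (θ⁻¹ g) := by
      conv_lhs => rw [← map_symm_map' θ K, h2, map_conjBy]
    calc Subgroup.map θ⁻¹.toMonoidHom K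
        = conjBy (conjBy (Subgroup.map θ⁻¹.toMonoidHom K) (θ⁻¹ g)) (θ⁻¹ g)⁻¹ := by
          rw [conjBy_conjBy, mul_inv_cancel, conjBy_one]
      _ = conjBy K (θ⁻¹ g)⁻¹ := by rw [← e]
  set a : RAAG Γ := ret Γ Y₁ (g * f⁻¹) * f with ha
  set b : RAAG Γ := ret Γ Y₁ ((θ⁻¹ g)⁻¹ * ((θ⁻¹ f)⁻¹)⁻¹) * (θ⁻¹ f)⁻¹ with hb
  have s1 : Subgroup.map θ.toMonoidHom P ≤ conjBy P a := step θ f g h1 h2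
  have s2 : Subgroup.map θ⁻¹.toMonoidHom P ≤ conjBy P b :=
    step θ⁻¹ (θ⁻¹ f)⁻¹ (θ⁻¹ g)⁻¹ h1' h2'
  -- sandwich
  have s3 : P ≤ conjBy P (a * θ b) := by
    calc P = Subgroup.map θ.toMonoidHom (Subgroup.map θ⁻¹.toMonoidHom P) :=
          (map_symm_map θ P).symm
      _ ≤ Subgroup.map θ.toMonoidHom (conjBy P b) := Subgroup.map_mono s2
      _ = conjBy (Subgroup.map θ.toMonoidHom P) (θ b) := map_conjBy θ P b
      _ ≤ conjBy (conjBy P a) (θ b) := conjBy_mono s1 (θ b)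
      _ = conjBy P (a * θ b) := conjBy_conjBy P a (θ b)
  have s4 : conjBy P (a * θ b) = P := by
    set w : RAAG Γ := a * θ b with hw
    have hc : ∀ x ∈ P, (w⁻¹)⁻¹ * x * w⁻¹ ∈ P := by
      intro x hx
      obtain ⟨p, hp, hpe⟩ := mem_conjBy.1 (s3 hx)
      have : (w⁻¹)⁻¹ * x * w⁻¹ = p := by rw [hpe]; group
      rwa [this]
    have h5 : conjBy P w⁻¹ = P := conjBy_eq_of_le (Y₁ ∩ Y₂) w⁻¹ hc
    calc conjBy P w = conjBy (conjBy P w⁻¹) w := by rw [h5]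
      _ = conjBy P (w⁻¹ * w) := conjBy_conjBy P w⁻¹ w
      _ = P := by rw [inv_mul_cancel, conjBy_one]
  have s5 : conjBy P a = conjBy P (θ b)⁻¹ := by
    calc conjBy P a = conjBy P (a * θ b * (θ b)⁻¹) := by rw [mul_assoc, mul_inv_cancel, mul_one]
      _ = conjBy (conjBy P (a * θ b)) (θ b)⁻¹ := (conjBy_conjBy P (a * θ b) (θ b)⁻¹).symm
      _ = conjBy P (θ b)⁻¹ := by rw [s4]
  have s6 : conjBy P (θ b)⁻¹ ≤ Subgroup.map θ.toMonoidHom P := by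
    have e : P ≤ conjBy (Subgroup.map θ.toMonoidHom P) (θ b) := by
      calc P = Subgroup.map θ.toMonoidHom (Subgroup.map θ⁻¹.toMonoidHom P) :=
            (map_symm_map θ P).symm
        _ ≤ Subgroup.map θ.toMonoidHom (conjBy P b) := Subgroup.map_mono s2
        _ = conjBy (Subgroup.map θ.toMonoidHom P) (θ b) := map_conjBy θ P b
    calc conjBy P (θ b)⁻¹
        ≤ conjBy (conjBy (Subgroup.map θ.toMonoidHom P) (θ b)) (θ b)⁻¹ :=
          conjBy_mono e (θ b)⁻¹
      _ = conjBy (Subgroup.map θ.toMonoidHom P) (θ b * (θ b)⁻¹) :=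
          conjBy_conjBy _ _ _
      _ = Subgroup.map θ.toMonoidHom P := by rw [mul_inv_cancel, conjBy_one]
  refine ⟨a, ?_⟩
  rw [hHK]
  exact le_antisymm s1 (s5 ▸ s6)

end PCG
end

section
/- Let Γ be a finite simple graph with vertex set X. For all x, z ∈ X: (i) 𝔞(x) = 𝔞(z) if and only if z ∈ [x]; (ii) [x] = 𝔞(x) \ ⋃{𝔞(y) : y ∈ 𝔞(x) and 𝔞(y) ⊊ 𝔞(x)}; (iii) if 𝔞(x) = cl({x}) then [x] = [x]⊥, while if cl({x}) ⊊ 𝔞(x) then [x] = [x]◇. -/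
namespace PCG

section Aux

variable {X : Type*} (Γ : SimpleGraph X)

lemma link_eq (x : X) : perp Γ {x} \ {x} = {u | Γ.Adj u x} := by
  ext u
  simp only [perp, Set.mem_diff, Set.mem_setOf_eq, Set.mem_singleton_iff]
  constructor
  · rintro ⟨h, hne⟩
    rcases h x rfl with h | h
    · exact absurd h hne
    · exact h
  · intro h
    exact ⟨fun y hy => by rw [hy]; exact Or.inr h, h.ne⟩

lemma mem_perp_singleton {u x : X} : u ∈ perp Γ {x} ↔ u = x ∨ Γ.Adj u x := by
  simp [perp]

lemma mem_aSet_iff {u x : X} :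
    u ∈ aSet Γ {x} ↔ ∀ w, Γ.Adj w x → u = w ∨ Γ.Adj u w := by
  simp only [aSet, Set.mem_iInter, Set.mem_singleton_iff]
  constructor
  · intro h w hw
    have h' := h x rfl
    rw [link_eq] at h'
    exact h' w hw
  · intro h y hy
    rw [hy, link_eq]
    exact fun w hw => h w hw

lemma mem_cl_iff {u x : X} :
    u ∈ cl Γ {x} ↔ ∀ w, (w = x ∨ Γ.Adj w x) → u = w ∨ Γ.Adj u w := by
  simp only [cl, perp, Set.mem_setOf_eq, Set.mem_singleton_iff]
  constructor
  · intro H w hw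
    exact H w fun v hv => hv ▸ hw
  · intro H w hw
    exact H w (hw x rfl)

lemma self_mem_aSet (x : X) : x ∈ aSet Γ {x} :=
  (mem_aSet_iff Γ).2 fun _ hw => Or.inr hw.symm

lemma aSet_mono {x z : X} (hz : z ∈ aSet Γ {x}) : aSet Γ {z} ⊆ aSet Γ {x} := by
  intro u hu
  rw [mem_aSet_iff] at hz hu ⊢
  intro w hw
  rcases hz w hw with h | h
  · subst h
    -- hw : Γ.Adj z x ; goal : u = z ∨ Γ.Adj u z
    rcases hu x hw.symm with h | h
    · exact h ▸ Or.inr hw.symm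
    · rcases hz u h with h' | h'
      · exact Or.inl h'.symm
      · exact Or.inr h'.symm
  · exact hu w h.symm

lemma mutual_sim {x z : X} (hzx : z ∈ aSet Γ {x}) (hxz : x ∈ aSet Γ {z}) :
    z ∈ simClass Γ x := by
  rw [mem_aSet_iff] at hzx hxz
  by_cases hadj : Γ.Adj x z
  · left
    show perp Γ {z} = perp Γ {x}
    ext u
    rw [mem_perp_singleton, mem_perp_singleton]
    constructor
    · rintro (rfl | h)
      · exact Or.inr hadj.symm
      · rcases hxz u h with h' | h'
        · exact Or.inl h'.symm
        · exact Or.inr h'.symm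
    · rintro (rfl | h)
      · exact Or.inr hadj
      · rcases hzx u h with h' | h'
        · exact Or.inl h'.symm
        · exact Or.inr h'.symm
  · right
    show perp Γ {z} \ {z} = perp Γ {x} \ {x}
    rw [link_eq, link_eq]
    ext u
    simp only [Set.mem_setOf_eq]
    constructor
    · intro h
      rcases hxz u h with h' | h'
      · subst h'; exact absurd h hadj
      · exact h'.symm
    · intro h
      rcases hzx u h with h' | h'
      · subst h'; exact absurd h.symm hadj
      · exact h'.symm

lemma dia_adj_iff {x z : X} (h : z ∈ diaClass Γ x) (u : X) :
    Γ.Adj u z ↔ Γ.Adj u x := by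
  have h' : ({u | Γ.Adj u z} : Set X) = {u | Γ.Adj u x} := by
    rw [← link_eq, ← link_eq]; exact h
  exact Set.ext_iff.1 h' u

lemma perp_adj_iff {x z : X} (h : z ∈ perpClass Γ x) (u : X) :
    (u = z ∨ Γ.Adj u z) ↔ (u = x ∨ Γ.Adj u x) := by
  have h' := Set.ext_iff.1 (h : perp Γ {z} = perp Γ {x}) u
  rw [mem_perp_singleton, mem_perp_singleton] at h'
  exact h'

lemma sim_aSet_eq {x z : X} (h : z ∈ simClass Γ x) : aSet Γ {x} = aSet Γ {z} := by
  rcases h with h | h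
  · -- same star
    by_cases hzx : z = x
    · rw [hzx]
    · have hadj : Γ.Adj z x := by
        rcases (perp_adj_iff Γ h z).1 (Or.inl rfl) with h' | h'
        · exact absurd h' hzx
        · exact h'
      ext u
      rw [mem_aSet_iff, mem_aSet_iff]
      constructor
      · intro H w hw
        rcases (perp_adj_iff Γ h w).1 (Or.inr hw) with rfl | hw'
        · -- w = x : need u = x ∨ Γ.Adj u x
          rcases H z hadj with rfl | h'
          · exact Or.inr hadj
          · rcases (perp_adj_iff Γ h u).1 (Or.inr h') with h'' | h''
            · exact Or.inl h''
            · exact Or.inr h''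
        · exact H w hw'
      · intro H w hw
        rcases (perp_adj_iff Γ h w).2 (Or.inr hw) with rfl | hw'
        · -- w = z : need u = z ∨ Γ.Adj u z
          rcases H x hadj.symm with rfl | h'
          · exact Or.inr hadj.symm
          · rcases (perp_adj_iff Γ h u).2 (Or.inr h') with h'' | h''
            · exact Or.inl h''
            · exact Or.inr h''
        · exact H w hw'
  · -- same link
    ext u
    rw [mem_aSet_iff, mem_aSet_iff]
    constructor
    · intro H w hw
      exact H w ((dia_adj_iff Γ h w).1 hw)
    · intro H w hw
      exact H w ((dia_adj_iff Γ h w).2 hw)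

lemma mem_simClass_self (x : X) : x ∈ simClass Γ x := Or.inl rfl

end Aux

/-- (i) `𝔞(x) = 𝔞(z)` iff `z ∈ [x]`;
(ii) `[x] = 𝔞(x) \ ⋃ {𝔞(y) : y ∈ 𝔞(x), 𝔞(y) ⊊ 𝔞(x)}`;
(iii) if `𝔞(x) = cl({x})` then `[x] = [x]⊥`, and if `cl({x}) ⊊ 𝔞(x)` then
`[x] = [x]◇`. -/
theorem simClass_aSet {X : Type*} [Fintype X] (Γ : SimpleGraph X) (x z : X) :
    (aSet Γ {x} = aSet Γ {z} ↔ z ∈ simClass Γ x) ∧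
    (simClass Γ x =
      aSet Γ {x} \ ⋃ y ∈ {y : X | y ∈ aSet Γ {x} ∧ aSet Γ {y} ⊂ aSet Γ {x}},
        aSet Γ {y}) ∧
    ((aSet Γ {x} = cl Γ {x} → simClass Γ x = perpClass Γ x) ∧
     (cl Γ {x} ⊂ aSet Γ {x} → simClass Γ x = diaClass Γ x)) := by
  refine ⟨⟨fun h => ?_, fun h => sim_aSet_eq Γ h⟩, ?_, fun hcl => ?_, fun hcl => ?_⟩
  · exact mutual_sim Γ (h ▸ self_mem_aSet Γ z) (h.symm ▸ self_mem_aSet Γ x)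
  · -- part (ii)
    ext w
    simp only [Set.mem_diff, Set.mem_iUnion, Set.mem_setOf_eq, not_exists]
    constructor
    · intro hw
      have heq := sim_aSet_eq Γ hw
      refine ⟨heq ▸ self_mem_aSet Γ w, ?_⟩
      rintro y ⟨hy, hss⟩ hwy
      have h1 : aSet Γ {w} ⊆ aSet Γ {y} := aSet_mono Γ hwy
      exact hss.not_subset (heq ▸ h1)
    · rintro ⟨hw, hnot⟩
      have h1 : aSet Γ {w} ⊆ aSet Γ {x} := aSet_mono Γ hw
      have h2 : aSet Γ {w} = aSet Γ {x} := by
        by_contra hne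
        exact hnot w ⟨hw, ⟨h1, fun hc => hne (le_antisymm h1 hc)⟩⟩ (self_mem_aSet Γ w)
      have hx : x ∈ aSet Γ {w} := by rw [h2]; exact self_mem_aSet Γ x
      exact mutual_sim Γ hw hx
  · -- part (iii) first half
    refine Set.Subset.antisymm ?_ Set.subset_union_left
    rintro w (hw | hw)
    · exact hw
    · by_cases hwx : w = x
      · rw [hwx]; exact rfl
      · exfalso
        have hwa : w ∈ aSet Γ {x} := sim_aSet_eq Γ (Or.inr hw) ▸ self_mem_aSet Γ w
        rw [hcl, mem_cl_iff] at hwa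
        rcases hwa x (Or.inl rfl) with h' | h'
        · exact hwx h'
        · exact Γ.irrefl ((dia_adj_iff Γ hw x).1 h'.symm)
  · -- part (iii) second half
    refine Set.Subset.antisymm ?_ Set.subset_union_right
    rintro w (hw | hw)
    · by_cases hwx : w = x
      · rw [hwx]; exact rfl
      · exfalso
        have hadj : Γ.Adj w x := by
          rcases (perp_adj_iff Γ hw w).1 (Or.inl rfl) with h' | h'
          · exact absurd h' hwx
          · exact h'
        refine hcl.not_subset ?_
        intro u hu
        rw [mem_aSet_iff] at hu
        rw [mem_cl_iff]
        rintro v (rfl | hv)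
        · -- need u = x ∨ Γ.Adj u x
          rcases hu w hadj with rfl | h'
          · exact Or.inr hadj
          · exact (perp_adj_iff Γ hw u).1 (Or.inr h')
        · exact hu v hv
    · exact hw

end PCG
end
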